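/- Let G be a compact Hausdorff topological group and let S be a subsemigroup of G that is locally compact in the subspace topology. Then S is a compact subgroup of G (in particular S is closed in G). -/

import Mathlib

open Set

/-- The closure of a multiplicatively closed set is multiplicatively closed. -/
lemma closure_mul_closed {G : Type*} [Group G] [TopologicalSpace G] [IsTopologicalGroup G]
    {S : Set G} (hmul : ∀ a ∈ S, ∀ b ∈ S, a * b ∈ S) :
    ∀ a ∈ closure S, ∀ b ∈ closure S, a * b ∈ closure S := by
  intro a ha b hb
  have h := Subsemigroup.top_closure_mul_self_subset
    (⟨S, fun {x y} hx hy => hmul x hx y hy⟩ : Subsemigroup G)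
  exact h (Set.mul_mem_mul ha hb)

/-- F. Wright's theorem: any locally compact subsemigroup of a compact
Hausdorff topological group is a compact (in particular closed) subgroup. -/
theorem stmt_10 {G : Type*} [Group G] [TopologicalSpace G] [IsTopologicalGroup G]
    [T2Space G] [CompactSpace G]
    (S : Set G) (hne : S.Nonempty) (hmul : ∀ a ∈ S, ∀ b ∈ S, a * b ∈ S)
    (hlc : LocallyCompactSpace S) :
    IsCompact S ∧ IsClosed S ∧ ∃ H : Subgroup G, S = (H : Set G) := by
  classical
  set T : Set G := closure S with hT
  have hST : S ⊆ T := subset_closure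
  have hTclosed : IsClosed T := isClosed_closure
  have hTcompact : IsCompact T := hTclosed.isCompact
  have hTmul : ∀ a ∈ T, ∀ b ∈ T, a * b ∈ T := closure_mul_closed hmul
  -- T is closed under inverses
  have hinvT : ∀ t ∈ T, t⁻¹ ∈ T := by
    intro t ht
    set P : Set G := Set.range (fun n : ℕ => t ^ (n + 1)) with hP
    have hPmul : ∀ a ∈ P, ∀ b ∈ P, a * b ∈ P := by
      rintro _ ⟨m, rfl⟩ _ ⟨n, rfl⟩
      exact ⟨m + n + 1, by rw [← pow_add]; ring_nf⟩
    have hPsub : P ⊆ T := by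
      rintro _ ⟨n, rfl⟩
      induction n with
      | zero => simpa using ht
      | succ n ih =>
        show t ^ (n + 1 + 1) ∈ T
        rw [pow_succ]; exact hTmul _ ih _ ht
    have hclPT : closure P ⊆ T := closure_minimal hPsub hTclosed
    have hcPmul := closure_mul_closed hPmul
    obtain ⟨m, hmP, hm⟩ := exists_idempotent_in_compact_subsemigroup
      (fun r => continuous_mul_right r) (closure P)
      ⟨t, subset_closure ⟨0, by simp⟩⟩ isClosed_closure.isCompact hcPmul
    have hm1 : m = 1 := mul_eq_left.mp hm
    have h1 : (1 : G) ∈ closure P := hm1 ▸ hmP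
    have hmem : t⁻¹ ∈ (fun x => t⁻¹ * x) '' closure P := ⟨1, h1, mul_one _⟩
    rw [show (fun x => t⁻¹ * x) '' closure P = closure ((fun x => t⁻¹ * x) '' P) from
      (Homeomorph.mulLeft t⁻¹).image_closure P] at hmem
    have himg : (fun x => t⁻¹ * x) '' P ⊆ T := by
      rintro _ ⟨_, ⟨n, rfl⟩, rfl⟩
      have : t⁻¹ * t ^ (n + 1) = t ^ n := by
        rw [pow_succ']; exact inv_mul_cancel_left t (t ^ n)
      show t⁻¹ * t ^ (n + 1) ∈ T
      rw [this]
      cases n with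
      | zero => simpa using hclPT h1
      | succ k => exact hPsub ⟨k, rfl⟩
    exact closure_minimal himg hTclosed hmem
  -- S is relatively open in T
  obtain ⟨U, hUopen, hSU⟩ : ∃ U : Set G, IsOpen U ∧ S = U ∩ T := by
    have key : ∀ x, x ∈ S → ∃ U : Set G, IsOpen U ∧ x ∈ U ∧ U ∩ T ⊆ S := by
      intro x hx
      obtain ⟨K, hKc, hKn⟩ := exists_compact_mem_nhds (⟨x, hx⟩ : S)
      rw [mem_nhds_subtype] at hKn
      obtain ⟨u, hu, huK⟩ := hKn
      obtain ⟨U, hUu, hUopen, hxU⟩ := mem_nhds_iff.mp hu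
      refine ⟨U, hUopen, hxU, ?_⟩
      have hKim : IsCompact (Subtype.val '' K) := hKc.image continuous_subtype_val
      have hsub : U ∩ S ⊆ Subtype.val '' K := by
        rintro y ⟨hyU, hyS⟩
        exact ⟨⟨y, hyS⟩, huK (hUu hyU), rfl⟩
      calc U ∩ T ⊆ closure (U ∩ S) := hUopen.inter_closure
        _ ⊆ closure (Subtype.val '' K) := closure_mono hsub
        _ = Subtype.val '' K := hKim.isClosed.closure_eq
        _ ⊆ S := by rintro _ ⟨⟨y, hy⟩, _, rfl⟩; exact hy
    choose U hUo hxU hUS using key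
    refine ⟨⋃ (x : G) (h : x ∈ S), U x h, isOpen_iUnion fun x => isOpen_iUnion fun h => hUo x h, ?_⟩
    apply Set.Subset.antisymm
    · intro y hy
      exact ⟨Set.mem_iUnion.mpr ⟨y, Set.mem_iUnion.mpr ⟨hy, hxU y hy⟩⟩, hST hy⟩
    · rintro y ⟨hyU, hyT⟩
      obtain ⟨x, hxmem⟩ := Set.mem_iUnion.mp hyU
      obtain ⟨h, hyUx⟩ := Set.mem_iUnion.mp hxmem
      exact hUS x h ⟨hyUx, hyT⟩
  -- translates of S are dense in T
  have hdense : ∀ t ∈ T, T ⊆ closure ((fun x => t * x) '' S) := by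
    intro t ht y hy
    have himg : (fun x => t * x) '' closure S = closure ((fun x => t * x) '' S) :=
      (Homeomorph.mulLeft t).image_closure S
    rw [← himg]
    exact ⟨t⁻¹ * y, hTmul _ (hinvT t ht) _ hy, by simp⟩
  -- S is closed under inverses
  have hinvS : ∀ t ∈ S, t⁻¹ ∈ S := by
    intro t ht
    set V : Set G := (fun x : G => x⁻¹) ⁻¹' U with hV
    have hVopen : IsOpen V := hUopen.preimage continuous_inv
    have htU : t ∈ U := (hSU.subset ht).1
    have hp : t⁻¹ ∈ V := by simpa [hV] using htU
    have hpT : t⁻¹ ∈ T := hinvT t (hST ht)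
    have hcl : t⁻¹ ∈ closure ((fun x => t * x) '' S) := hdense t (hST ht) hpT
    obtain ⟨q, hqV, hq⟩ := mem_closure_iff.mp hcl V hVopen hp
    obtain ⟨s₂, hs₂, rfl⟩ := hq
    have hqinvU : (t * s₂)⁻¹ ∈ U := hqV
    have hqT : t * s₂ ∈ T := hTmul t (hST ht) s₂ (hST hs₂)
    have hqinvS : (t * s₂)⁻¹ ∈ S := hSU.superset ⟨hqinvU, hinvT _ hqT⟩
    have : t⁻¹ = s₂ * (t * s₂)⁻¹ := by group
    rw [this]
    exact hmul _ hs₂ _ hqinvS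
  -- T ⊆ S, hence S = T
  have hTS : T ⊆ S := by
    intro t ht
    obtain ⟨s₀, hs₀⟩ := hne
    have hs₀U : s₀ ∈ U := (hSU.subset hs₀).1
    obtain ⟨q, hqU, hq⟩ := mem_closure_iff.mp (hdense t ht (hST hs₀)) U hUopen hs₀U
    obtain ⟨s₂, hs₂, rfl⟩ := hq
    have hqS : t * s₂ ∈ S := hSU.superset ⟨hqU, hTmul t ht s₂ (hST hs₂)⟩
    have : t = (t * s₂) * s₂⁻¹ := by group
    rw [this]
    exact hmul _ hqS _ (hinvS s₂ hs₂)
  have hSeq : S = T := Set.Subset.antisymm hST hTS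
  refine ⟨hSeq ▸ hTcompact, hSeq ▸ hTclosed, ⟨{
    carrier := S
    mul_mem' := fun ha hb => hmul _ ha _ hb
    one_mem' := by
      obtain ⟨s, hs⟩ := hne
      have h := hmul s hs s⁻¹ (hinvS s hs)
      rwa [mul_inv_cancel] at h
    inv_mem' := fun ha => hinvS _ ha }, rfl⟩⟩
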